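/- Suppose λ ∈ (0,1) and μ is supported on [β_min, ∞) for some β_min > 0. For each c > 0 let τ(c) denote the unique nonnegative solution of x = c + λ ∫ βx/(β+x) dμ(β). Then τ(c)/c → 1/(1−λ) as c → 0⁺; that is, in the high-SNR limit the fixed point of the state evolution is asymptotic to c/(1−λ). -/

import Mathlib

open MeasureTheory

/-- Suppose `λ ∈ (0,1)` and `μ` is a probability measure supported on
`[β_min, ∞)` with `β_min > 0`. For each `c > 0` let `τ c` be the unique nonnegative
solution of `x = c + λ ∫ βx/(β+x) dμ(β)`. Then `τ(c)/c → 1/(1-λ)` as `c → 0⁺`. -/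
theorem state_evolution_high_SNR_limit
    (μ : Measure ℝ) [IsProbabilityMeasure μ]
    (βmin : ℝ) (hβmin : 0 < βmin) (hμ : ∀ᵐ β ∂μ, βmin ≤ β)
    (lam : ℝ) (hlam : lam ∈ Set.Ioo (0 : ℝ) 1)
    (τ : ℝ → ℝ)
    (hτ : ∀ c : ℝ, 0 < c →
      (0 ≤ τ c ∧ τ c = c + lam * ∫ β, β * τ c / (β + τ c) ∂μ) ∧
      (∀ y : ℝ, 0 ≤ y → y = c + lam * ∫ β, β * y / (β + y) ∂μ → y = τ c)) :
    Filter.Tendsto (fun c => τ c / c) (nhdsWithin 0 (Set.Ioi 0))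
      (nhds (1 / (1 - lam))) := by
  obtain ⟨hlam0, hlam1⟩ := hlam
  have h1lam : (0:ℝ) < 1 - lam := by linarith
  -- key bounds on τ c
  have key : ∀ c : ℝ, 0 < c → τ c ≤ c / (1 - lam) ∧
      c - lam * (c / (1 - lam))^2 / βmin ≤ (1 - lam) * τ c := by
    intro c hc
    obtain ⟨⟨ht0, heq⟩, -⟩ := hτ c hc
    set t := τ c with htdef
    have hmeas : AEStronglyMeasurable (fun β : ℝ => β * t / (β + t)) μ :=
      ((measurable_id.mul_const t).div (measurable_id.add_const t)).aestronglyMeasurable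
    have hae : ∀ᵐ β ∂μ, (0 ≤ β * t / (β + t) ∧ β * t / (β + t) ≤ t) ∧
        t - t^2 / βmin ≤ β * t / (β + t) := by
      filter_upwards [hμ] with β hβb
      have hβpos : 0 < β := lt_of_lt_of_le hβmin hβb
      have hden : 0 < β + t := by linarith
      have hβne : β ≠ 0 := ne_of_gt hβpos
      refine ⟨⟨div_nonneg (mul_nonneg hβpos.le ht0) hden.le, ?_⟩, ?_⟩
      · rw [div_le_iff₀ hden]
        nlinarith [sq_nonneg t]
      · have h1 : t^2 / β ≤ t^2 / βmin := by gcongr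
        have h2 : t - t^2 / β ≤ β * t / (β + t) := by
          rw [le_div_iff₀ hden]
          have e : t^2 / β * (β + t) = t^2 + t^3 / β := by field_simp
          have hY : 0 ≤ t^3 / β := div_nonneg (pow_nonneg ht0 3) hβpos.le
          nlinarith [e, hY]
        linarith
    have hint : Integrable (fun β : ℝ => β * t / (β + t)) μ := by
      refine Integrable.mono' (integrable_const t) hmeas ?_
      filter_upwards [hae] with β hβ
      rw [Real.norm_eq_abs, abs_of_nonneg hβ.1.1]; exact hβ.1.2
    have hItop : (∫ β, β * t / (β + t) ∂μ) ≤ t := by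
      calc (∫ β, β * t / (β + t) ∂μ) ≤ ∫ _, t ∂μ := by
            refine integral_mono_ae hint (integrable_const t) ?_
            filter_upwards [hae] with β hβ using hβ.1.2
        _ = t := by simp
    have hIbot : t - t^2 / βmin ≤ ∫ β, β * t / (β + t) ∂μ := by
      calc t - t^2 / βmin = ∫ _, t - t^2 / βmin ∂μ := by simp
        _ ≤ ∫ β, β * t / (β + t) ∂μ := by
            refine integral_mono_ae (integrable_const _) hint ?_
            filter_upwards [hae] with β hβ using hβ.2
    constructor
    · have : t ≤ c + lam * t := by nlinarith
      rw [le_div_iff₀ h1lam]; nlinarith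
    · have hle : t ≤ c / (1 - lam) := by
        have : t ≤ c + lam * t := by nlinarith
        rw [le_div_iff₀ h1lam]; nlinarith
      have h1 : c + lam * (t - t^2 / βmin) ≤ t := by nlinarith
      have h2 : t^2 ≤ (c / (1 - lam))^2 := by
        have := sq_le_sq' (by linarith : -(c / (1 - lam)) ≤ t) hle
        simpa using this
      have h3 : lam * t^2 / βmin ≤ lam * (c / (1 - lam))^2 / βmin := by gcongr
      have e1 : lam * (t - t ^ 2 / βmin) = lam * t - lam * t ^ 2 / βmin := by ring
      linarith [e1]
  -- squeeze
  have hg : Filter.Tendsto (fun c : ℝ => 1 / (1 - lam) - lam * c / ((1 - lam)^3 * βmin))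
      (nhdsWithin 0 (Set.Ioi 0)) (nhds (1 / (1 - lam))) := by
    have hcont : Continuous (fun c : ℝ => 1 / (1 - lam) - lam * c / ((1 - lam)^3 * βmin)) :=
      continuous_const.sub ((continuous_const.mul continuous_id).div_const _)
    have h := (hcont.tendsto 0).mono_left (nhdsWithin_le_nhds (s := Set.Ioi (0:ℝ)))
    simpa using h
  refine tendsto_of_tendsto_of_tendsto_of_le_of_le' hg tendsto_const_nhds ?_ ?_
  · filter_upwards [self_mem_nhdsWithin] with c (hc : 0 < c)
    obtain ⟨-, h2⟩ := key c hc
    rw [le_div_iff₀ hc]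
    have hden : (0:ℝ) < (1 - lam)^3 * βmin := by positivity
    have e : (1 / (1 - lam) - lam * c / ((1 - lam)^3 * βmin)) * c * (1 - lam)
        = c - lam * (c / (1 - lam))^2 / βmin := by
      field_simp
    nlinarith [h2, e]
  · filter_upwards [self_mem_nhdsWithin] with c (hc : 0 < c)
    obtain ⟨h1, -⟩ := key c hc
    rw [div_le_div_iff₀ hc h1lam]
    calc τ c * (1 - lam) ≤ (c / (1 - lam)) * (1 - lam) := by gcongr
      _ = c := by field_simp
      _ ≤ 1 * c := by linarith
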